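/- If a permutation σ of [n] (n ≥ 2) has the form σ = π_L · 1 · π_R where π_L is a permutation on ℓ elements with q descents and π_R has d−q−1 descents (so des(σ) = d), then w(σ) = w(π_L · 1) + w(π_R) + des(π_R). -/

import Mathlib

/-- Number of descents of a sequence. -/
def desL : List ℕ → ℕ
  | a :: b :: t => (if b < a then 1 else 0) + desL (b :: t)
  | _ => 0

/-- Repeatedly split a sequence just after its maximum element. -/
def splitLeftAux : ℕ → List ℕ → List (List ℕ)
  | 0, _ => []
  | _, [] => []
  | fuel + 1, l =>
    let i := l.idxOf (l.foldr Nat.max 0)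
    l.take (i + 1) :: splitLeftAux fuel (l.drop (i + 1))

def splitLeft (l : List ℕ) : List (List ℕ) := splitLeftAux l.length l

/-- Split a sequence at its minimum element, splitting the left part
repeatedly just after its maximum. -/
def splitAll (l : List ℕ) : List (List ℕ) :=
  let m := l.foldr Nat.min (l.headD 0)
  let i := l.idxOf m
  splitLeft (l.take i) ++ [[m]] ++ [l.drop (i + 1)]

/-- The weight of a sequence of distinct naturals (fuelled version; the fuel
`(length+2)^2` in `weightL` is more than the recursion depth ever needed). -/
def weightAux : ℕ → List ℕ → ℕ
  | 0, _ => 0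
  | fuel + 1, l =>
    if l.length ≤ 1 ∨ l.Pairwise (· < ·) then 0
    else ((splitAll (l ++ [l.foldr Nat.max 0 + 1])).map
      (fun p => desL p + weightAux fuel p)).sum

/-- The weight of a permutation viewed as a sequence. -/
def weightL (l : List ℕ) : ℕ := weightAux ((l.length + 2) ^ 2) l

/-- `l` is a permutation of `[n] = {1,…,n}` written as a sequence. -/
def IsPermList (n : ℕ) (l : List ℕ) : Prop := l.Perm (List.range' 1 n)


lemma desL_cons (a : ℕ) (xs : List ℕ) :
    desL (a :: xs) = (if xs.headD a < a then 1 else 0) + desL xs := by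
  cases xs <;> simp [desL]

lemma desL_sorted : ∀ {l : List ℕ}, l.Pairwise (· < ·) → desL l = 0
  | [], _ => rfl
  | [_], _ => rfl
  | a :: b :: t, h => by
    rw [List.pairwise_cons] at h
    have hab : a < b := h.1 _ (by simp)
    simp [desL, Nat.not_lt.2 hab.le, desL_sorted h.2]

lemma desL_append {l t : List ℕ} (ht : t.Pairwise (· < ·))
    (hlt : ∀ a ∈ l, ∀ b ∈ t, a < b) : desL (l ++ t) = desL l := by
  induction l with
  | nil => simpa [desL] using desL_sorted ht
  | cons a l ih =>
    have ih' := ih (fun a ha b hb => hlt a (by simp [ha]) b hb)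
    rw [List.cons_append, desL_cons, desL_cons, ih']
    congr 1
    cases l with
    | nil =>
      simp only [List.nil_append]
      cases t with
      | nil => simp
      | cons b t => simp [Nat.not_lt.2 (hlt a (by simp) b (by simp)).le]
    | cons c l => simp

lemma foldr_min_le_self : ∀ (l : List ℕ) (a : ℕ), ∀ x ∈ l, l.foldr Nat.min a ≤ x
  | [], _, x, hx => by simp at hx
  | b :: l, a, x, hx => by
    rcases List.mem_cons.1 hx with rfl | hx
    · exact Nat.min_le_left _ _
    · exact le_trans (Nat.min_le_right _ _) (foldr_min_le_self l a x hx)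

lemma foldr_min_le_init : ∀ (l : List ℕ) (a : ℕ), l.foldr Nat.min a ≤ a
  | [], _ => le_refl _
  | b :: l, a => le_trans (Nat.min_le_right _ _) (foldr_min_le_init l a)

lemma foldr_min_mem : ∀ (l : List ℕ) (a : ℕ), l.foldr Nat.min a = a ∨ l.foldr Nat.min a ∈ l
  | [], _ => Or.inl rfl
  | b :: l, a => by
    have : (b :: l).foldr Nat.min a = min b (l.foldr Nat.min a) := rfl
    rcases min_choice b (l.foldr Nat.min a) with h | h <;> rw [this, h]
    · exact Or.inr (by simp)
    · rcases foldr_min_mem l a with h' | h'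
      · exact Or.inl h'
      · exact Or.inr (by simp [h'])

lemma le_foldr_min : ∀ (l : List ℕ) (a m : ℕ), m ≤ a → (∀ x ∈ l, m ≤ x) → m ≤ l.foldr Nat.min a
  | [], _, _, ha, _ => ha
  | b :: l, a, m, ha, h => le_min (h b (by simp)) (le_foldr_min l a m ha (fun x hx => h x (by simp [hx])))

lemma le_foldr_max : ∀ (l : List ℕ) (a : ℕ), ∀ x ∈ l, x ≤ l.foldr Nat.max a
  | [], _, x, hx => by simp at hx
  | b :: l, a, x, hx => by
    rcases List.mem_cons.1 hx with rfl | hx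
    · exact Nat.le_max_left _ _
    · exact le_trans (le_foldr_max l a x hx) (Nat.le_max_right _ _)

lemma foldr_max_le {l : List ℕ} {n : ℕ} (h : ∀ x ∈ l, x ≤ n) (h0 : 0 ≤ n) :
    l.foldr Nat.max 0 ≤ n := by
  induction l with
  | nil => exact h0
  | cons b l ih => exact max_le (h b (by simp)) (ih fun x hx => h x (by simp [hx]))

lemma splitLeftAux_length : ∀ (f : ℕ) (x : List ℕ), ∀ p ∈ splitLeftAux f x, p.length ≤ x.length
  | 0, x, p, hp => by simp [splitLeftAux] at hp
  | f + 1, [], p, hp => by simp [splitLeftAux] at hp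
  | f + 1, c :: cs, p, hp => by
    simp only [splitLeftAux] at hp
    rcases List.mem_cons.1 hp with rfl | hp
    · simpa using List.length_take_le _ _
    · refine le_trans (splitLeftAux_length f _ p hp) ?_
      rw [List.length_drop]; omega

lemma sorted_short {l : List ℕ} (h : l.length ≤ 1) : l.Pairwise (· < ·) := by
  match l with
  | [] => simp
  | [a] => simp
  | a :: b :: t => simp at h

lemma sorted_cond {l t : List ℕ} (ht : t.Pairwise (· < ·))
    (hlt : ∀ a ∈ l, ∀ b ∈ t, a < b) :
    ((l ++ t).length ≤ 1 ∨ (l ++ t).Pairwise (· < ·)) ↔ l.Pairwise (· < ·) := by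
  constructor
  · rintro (h | h)
    · exact sorted_short (by rw [List.length_append] at h; omega)
    · exact h.sublist (List.sublist_append_left l t)
  · intro h
    exact Or.inr (List.pairwise_append.2 ⟨h, ht, hlt⟩)

lemma min_spec {l t : List ℕ} (hl : l ≠ [])
    (hlt : ∀ a ∈ l, ∀ b ∈ t, a < b) :
    (l ++ t).foldr Nat.min ((l ++ t).headD 0) ∈ l ∧
      ∀ x ∈ l ++ t, (l ++ t).foldr Nat.min ((l ++ t).headD 0) ≤ x := by
  set L := l ++ t with hL
  set m := L.foldr Nat.min (L.headD 0) with hm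
  have hLne : L ≠ [] := by
    cases l with
    | nil => exact absurd rfl hl
    | cons a l => simp [hL]
  have hhead : L.headD 0 ∈ L := by
    rcases List.exists_cons_of_ne_nil hLne with ⟨a, L', hLL⟩
    rw [hLL]; simp
  have hle : ∀ x ∈ L, m ≤ x := foldr_min_le_self L _
  have hmem : m ∈ L := by
    rcases foldr_min_mem L (L.headD 0) with h | h
    · rw [hm, h]; exact hhead
    · exact h
  refine ⟨?_, hle⟩
  rcases List.mem_append.1 hmem with h | h
  · exact h
  · obtain ⟨a, ha⟩ := List.exists_mem_of_ne_nil l hl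
    exact absurd (hlt a ha m h) (not_lt.2 (hle a (by simp [hL, ha])))

lemma weightAux_singleton (g : ℕ) (m : ℕ) : weightAux g [m] = 0 := by
  cases g <;> simp [weightAux]

lemma weightAux_step (g : ℕ) {l t : List ℕ} (ht : t.Pairwise (· < ·))
    (hlt : ∀ a ∈ l, ∀ b ∈ t, a < b) (hns : ¬ l.Pairwise (· < ·)) :
    ∃ m, m ∈ l ∧ (∀ x ∈ l, m ≤ x) ∧
      (t ++ [(l ++ t).foldr Nat.max 0 + 1]).Pairwise (· < ·) ∧
      (∀ a ∈ l, ∀ b ∈ t ++ [(l ++ t).foldr Nat.max 0 + 1], a < b) ∧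
      weightAux (g + 1) (l ++ t) =
        (((splitLeft (l.take (l.idxOf m))).map
            (fun p => desL p + weightAux g p)).sum
          + (desL (l.drop (l.idxOf m + 1))
          + weightAux g (l.drop (l.idxOf m + 1)
              ++ (t ++ [(l ++ t).foldr Nat.max 0 + 1])))) := by
  have hl : l ≠ [] := fun h => hns (h ▸ List.Pairwise.nil)
  set M := (l ++ t).foldr Nat.max 0 with hM
  set T := t ++ [M + 1] with hT
  have hTs : T.Pairwise (· < ·) := by
    rw [hT]; refine List.pairwise_append.2 ⟨ht, by simp, ?_⟩
    intro b hb c hc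
    simp only [List.mem_singleton] at hc; subst hc
    have : b ≤ M := le_foldr_max _ _ b (by simp [hb])
    omega
  have hlT : ∀ a ∈ l, ∀ b ∈ T, a < b := by
    intro a ha b hb
    rcases List.mem_append.1 hb with hb | hb
    · exact hlt a ha b hb
    · simp only [List.mem_singleton] at hb; subst hb
      have : a ≤ M := le_foldr_max _ _ a (by simp [ha])
      omega
  have hassoc : (l ++ t) ++ [M + 1] = l ++ T := by simp [hT]
  obtain ⟨hmem, hle⟩ := min_spec hl hlT
  set m := (l ++ T).foldr Nat.min ((l ++ T).headD 0) with hm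
  refine ⟨m, hmem, fun x hx => hle x (by simp [hx]), hTs, hlT, ?_⟩
  have hidx : (l ++ T).idxOf m = l.idxOf m := List.idxOf_append_of_mem hmem
  have hilt : l.idxOf m < l.length := List.idxOf_lt_length_iff.2 hmem
  rw [weightAux, if_neg (fun h => hns ((sorted_cond ht hlt).1 h))]
  rw [← hM, hassoc, splitAll]
  simp only [← hm, hidx]
  rw [List.take_append_of_le_length hilt.le,
      List.drop_append_of_le_length hilt]
  simp only [List.map_append, List.sum_append, List.map_cons, List.map_nil,
    List.sum_cons, List.sum_nil, weightAux_singleton]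
  have hdes : desL (l.drop (l.idxOf m + 1) ++ T) = desL (l.drop (l.idxOf m + 1)) := by
    refine desL_append hTs ?_
    exact fun a ha b hb => hlT a (List.mem_of_mem_drop ha) b hb
  rw [hdes]
  show _ + (0 + (0 + 0)) + _ = _
  ring

lemma wa_ext (f f' : ℕ) (l t t' : List ℕ) (ht : t.Pairwise (· < ·)) (ht' : t'.Pairwise (· < ·))
    (hlt : ∀ a ∈ l, ∀ b ∈ t, a < b) (hlt' : ∀ a ∈ l, ∀ b ∈ t', a < b)
    (hf : 2 * l.length + 1 ≤ f) (hf' : 2 * l.length + 1 ≤ f') :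
    weightAux f (l ++ t) = weightAux f' (l ++ t') := by
  induction f using Nat.strong_induction_on generalizing f' l t t' with
  | _ f IH =>
  obtain ⟨g, rfl⟩ : ∃ g, f = g + 1 := ⟨f - 1, by omega⟩
  obtain ⟨g', rfl⟩ : ∃ g, f' = g + 1 := ⟨f' - 1, by omega⟩
  by_cases hs : l.Pairwise (· < ·)
  · rw [weightAux, weightAux, if_pos ((sorted_cond ht hlt).2 hs),
      if_pos ((sorted_cond ht' hlt').2 hs)]
  · obtain ⟨m, hmem, hmle, hTs, hlT, he⟩ := weightAux_step g ht hlt hs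
    obtain ⟨m', hmem', hmle', hTs', hlT', he'⟩ := weightAux_step g' ht' hlt' hs
    have hmm : m = m' := le_antisymm (hmle m' hmem') (hmle' m hmem)
    subst hmm
    rw [he, he']
    have hilt : l.idxOf m < l.length := List.idxOf_lt_length_iff.2 hmem
    congr 1
    · apply congrArg List.sum
      apply List.map_congr_left
      intro p hp
      have hpl : p.length ≤ (l.take (l.idxOf m)).length :=
        splitLeftAux_length _ _ p hp
      rw [List.length_take] at hpl
      have h2 : 2 * p.length + 1 ≤ g := by omega
      have h2' : 2 * p.length + 1 ≤ g' := by omega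
      have := IH g (by omega) g' p [] [] (by simp) (by simp)
        (by simp) (by simp) h2 h2'
      simpa using this
    · congr 1
      have hdl : (l.drop (l.idxOf m + 1)).length = l.length - (l.idxOf m + 1) :=
        List.length_drop
      refine IH g (by omega) g' (l.drop (l.idxOf m + 1)) _ _ hTs hTs' ?_ ?_
        (by omega) (by omega)
      · exact fun a ha b hb => hlT a (List.mem_of_mem_drop ha) b hb
      · exact fun a ha b hb => hlT' a (List.mem_of_mem_drop ha) b hb

lemma weightAux_step' (g : ℕ) {l : List ℕ} (hns : ¬ l.Pairwise (· < ·)) :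
    ∃ m, m ∈ l ∧ (∀ x ∈ l, m ≤ x) ∧
      weightAux (g + 1) l =
        (((splitLeft (l.take (l.idxOf m))).map
            (fun p => desL p + weightAux g p)).sum
          + (desL (l.drop (l.idxOf m + 1))
          + weightAux g (l.drop (l.idxOf m + 1) ++ [l.foldr Nat.max 0 + 1]))) := by
  have hns' : ¬ (l ++ []).Pairwise (· < ·) := by simpa using hns
  obtain ⟨m, h1, h2, _, _, he⟩ :=
    weightAux_step g (l := l) (t := []) (by simp) (by simp) hns
  rw [List.append_nil] at he
  simp only [List.nil_append] at he
  exact ⟨m, h1, h2, he⟩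

lemma weightL_left (πL : List ℕ) (h2 : ∀ a ∈ πL, 2 ≤ a) (F : ℕ)
    (hF : 2 * πL.length + 1 ≤ F) :
    weightL (πL ++ [1]) =
      ((splitLeft πL).map (fun p => desL p + weightAux F p)).sum := by
  rcases eq_or_ne πL [] with rfl | hne
  · simp [weightL, splitLeft, splitLeftAux, weightAux_singleton]
  · have h1L : (1 : ℕ) ∉ πL := fun h => by have := h2 1 h; omega
    have hns : ¬ (πL ++ [1]).Pairwise (· < ·) := by
      intro h
      rcases List.exists_mem_of_ne_nil πL hne with ⟨a, ha⟩
      have h3 := (List.pairwise_append.1 h).2.2 a ha 1 (by simp)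
      have := h2 a ha; omega
    rw [weightL]
    have hsq : ∀ x : ℕ, (x + 3)^2 = x*x + 6*x + 9 := fun x => by ring
    have hKP : ((πL ++ [1]).length + 2)^2 = ((πL.length + 3)^2 - 1) + 1 := by
      simp only [List.length_append, List.length_cons, List.length_nil]
      have h9 : πL.length + (0 + 1) + 2 = πL.length + 3 := by omega
      rw [h9]
      have := hsq πL.length; omega
    rw [hKP]
    obtain ⟨m, hm1, hm2, he⟩ := weightAux_step' ((πL.length + 3)^2 - 1) hns
    have hm : m = 1 := by
      refine le_antisymm (hm2 1 (by simp)) ?_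
      rcases List.mem_append.1 hm1 with h | h
      · have := h2 m h; omega
      · simp only [List.mem_singleton] at h; omega
    subst hm
    have hidx : (πL ++ [1]).idxOf 1 = πL.length := by
      rw [List.idxOf_append_of_notMem h1L]; simp
    have hdrop : (πL ++ [1]).drop (πL.length + 1) = [] := by
      apply List.drop_eq_nil_of_le
      simp
    rw [he, hidx, List.take_left, hdrop]
    simp only [List.nil_append, weightAux_singleton]
    have : desL ([] : List ℕ) = 0 := rfl
    rw [this]
    have hSum : ((splitLeft πL).map (fun p => desL p + weightAux ((πL.length + 3)^2 - 1) p)).sum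
        = ((splitLeft πL).map (fun p => desL p + weightAux F p)).sum := by
      apply congrArg List.sum
      apply List.map_congr_left
      intro p hp
      have hpl : p.length ≤ πL.length := splitLeftAux_length _ _ p hp
      have := hsq πL.length
      have hw := wa_ext ((πL.length + 3)^2 - 1) F p [] [] (by simp) (by simp)
        (by simp) (by simp) (by omega) (by omega)
      simpa using hw
    omega

/-- If `σ = πL · 1 · πR` is a permutation of `[n]` with `d` descents, `πL` of
length `ℓ` with `q` descents and `πR` with `d-q-1` descents, then
`w(σ) = w(πL · 1) + w(πR) + des(πR)`. -/
theorem weight_split (n ℓ d q : ℕ) (πL πR : List ℕ) (hn : 2 ≤ n)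
    (hperm : IsPermList n (πL ++ [1] ++ πR)) (hℓ : πL.length = ℓ)
    (hq : desL πL = q) (hr : desL πR + q + 1 = d)
    (hd : desL (πL ++ [1] ++ πR) = d) :
    weightL (πL ++ [1] ++ πR) = weightL (πL ++ [1]) + weightL πR + desL πR := by
  have hperm' : (πL ++ [1] ++ πR).Perm (List.range' 1 n) := hperm
  have hlen : πL.length + 1 + πR.length = n := by
    have h := hperm'.length_eq
    simp at h
    omega
  have hmem : ∀ x ∈ πL ++ [1] ++ πR, 1 ≤ x := by
    intro x hx
    have := (List.mem_range'_1.1 (hperm'.mem_iff.1 hx)).1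
    omega
  have hnd : (πL ++ [1] ++ πR).Nodup :=
    hperm'.nodup_iff.2 (List.nodup_range' 1 (by decide))
  have h1L : (1 : ℕ) ∉ πL := by
    have h := (List.nodup_append.1 hnd).1
    have h2 := (List.nodup_append.1 h).2.2
    exact fun hx => h2 1 hx 1 (by simp) rfl
  have h2L : ∀ a ∈ πL, 2 ≤ a := by
    intro a ha
    have h1 := hmem a (by simp [ha])
    rcases eq_or_ne a 1 with rfl | hne
    · exact absurd ha h1L
    · omega
  have hsq : ∀ x : ℕ, (x + 2)^2 = x*x + 4*x + 4 := fun x => by ring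
  have hns : ¬ (πL ++ [1] ++ πR).Pairwise (· < ·) := by
    intro h; have := desL_sorted h; omega
  set g := (n + 2)^2 - 1 with hg
  rw [weightL]
  have hlen' : (πL ++ [1] ++ πR).length = n := by
    simp only [List.length_append, List.length_cons, List.length_nil]
    omega
  rw [hlen']
  have hg1 : (n + 2)^2 = g + 1 := by have := hsq n; omega
  rw [hg1]
  obtain ⟨m, hm1, hm2, he⟩ := weightAux_step' g hns
  have hm : m = 1 := le_antisymm (hm2 1 (by simp)) (hmem m hm1)
  subst hm
  have hidx : (πL ++ [1] ++ πR).idxOf 1 = πL.length := by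
    rw [List.append_assoc, List.idxOf_append_of_notMem h1L]
    simp
  have htake : (πL ++ [1] ++ πR).take πL.length = πL := by
    rw [List.append_assoc]; exact List.take_left
  have hdrop : (πL ++ [1] ++ πR).drop (πL.length + 1) = πR := by
    have h : (πL ++ [1]).length = πL.length + 1 := by simp
    rw [← h]; exact List.drop_left
  rw [he, hidx, htake, hdrop]
  rw [weightL_left πL h2L g (by have := hsq n; omega)]
  have hM : ∀ x ∈ πR, x < (πL ++ [1] ++ πR).foldr Nat.max 0 + 1 := by
    intro x hx
    have := le_foldr_max (πL ++ [1] ++ πR) 0 x (by simp [hx])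
    omega
  have hwr : weightAux g (πR ++ [(πL ++ [1] ++ πR).foldr Nat.max 0 + 1]) = weightL πR := by
    rw [weightL]
    have h2 : weightAux ((πR.length + 2)^2) (πR ++ []) = weightAux ((πR.length + 2)^2) πR := by
      rw [List.append_nil]
    rw [← h2]
    refine wa_ext g _ πR _ [] (by simp) (by simp) ?_ (by simp)
      (by have := hsq n; omega) (by have := hsq πR.length; omega)
    intro a ha b hb
    simp only [List.mem_singleton] at hb
    subst hb
    exact hM a ha
  rw [hwr]
  omega
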